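/- arXiv:2406.13379 — 2 statements merged into one kernel-verified Lean document; each statement's English description precedes it below -/
import Mathlib

section
/- Let V and P be real Hilbert spaces, T > 0, and ρ_f, ρ_s ∈ ℝ. Let a_f, a_s, m_f, m_s be continuous symmetric bilinear forms on V and let D : V → P be a continuous linear map. For continuously differentiable functions η, ψ : ℝ → V and continuous functions p, q : ℝ → P, define ⟨A(η,p),(ψ,q)⟩ := ρ_f ∫₀ᵀ m_f(η'(t), ψ(t)) dt + ∫₀ᵀ a_f(η(t), ψ(t)) dt − ∫₀ᵀ ⟨p(t), D ψ(t)⟩_P dt + ρ_s ∫₀ᵀ m_s(η'(t), ψ(t)) dt + ∫₀ᵀ a_s(∫₀ᵗ η(s) ds, ψ(t)) dt − ∫₀ᵀ ⟨D η(t), q(t)⟩_P dt + ρ_f m_f(η(0), ψ(0)) + ρ_s m_s(η(0), ψ(0)). Then ⟨A(η,p),(ψ,q)⟩ = ⟨A(ψ̄,q̄),(η̄,p̄)⟩, where for a function f defined on [0,T] the time reversal is f̄(t) := f(T − t). In other words, the adjoint of the abstract linear fluid–structure interaction operator A has the same structure as the forward operator but with the temporal flow of information reversed. -/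
open scoped InnerProductSpace
open MeasureTheory

/-- The abstract weak-form operator `A` of the linear unsteady fluid–structure interaction
problem (after substituting the solid displacement by the time integral of the velocity):
`⟨A(η,p),(ψ,q)⟩`. -/
noncomputable def fsiForm {V P : Type*} [NormedAddCommGroup V] [InnerProductSpace ℝ V]
    [NormedAddCommGroup P] [InnerProductSpace ℝ P]
    (T ρf ρs : ℝ) (af as mf ms : V →L[ℝ] V →L[ℝ] ℝ) (D : V →L[ℝ] P)
    (η : ℝ → V) (p : ℝ → P) (ψ : ℝ → V) (q : ℝ → P) : ℝ :=
  ρf * (∫ t in (0:ℝ)..T, mf (deriv η t) (ψ t))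
    + (∫ t in (0:ℝ)..T, af (η t) (ψ t))
    - (∫ t in (0:ℝ)..T, ⟪p t, D (ψ t)⟫_ℝ)
    + ρs * (∫ t in (0:ℝ)..T, ms (deriv η t) (ψ t))
    + (∫ t in (0:ℝ)..T, as (∫ s in (0:ℝ)..t, η s) (ψ t))
    - (∫ t in (0:ℝ)..T, ⟪D (η t), q t⟫_ℝ)
    + ρf * mf (η 0) (ψ 0) + ρs * ms (η 0) (ψ 0)

section Aux
variable {V : Type*} [NormedAddCommGroup V] [NormedSpace ℝ V]

lemma hasDerivAt_bilin (B : V →L[ℝ] V →L[ℝ] ℝ) {u v : ℝ → V} {u' v' : V} {t : ℝ}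
    (hu : HasDerivAt u u' t) (hv : HasDerivAt v v' t) :
    HasDerivAt (fun t => B (u t) (v t)) (B u' (v t) + B (u t) v') t := by
  have h1 : HasDerivAt (fun t => B (u t)) (B u') t := B.hasFDerivAt.comp_hasDerivAt t hu
  exact h1.clm_apply hv

lemma ibp_bilin (T : ℝ) (B : V →L[ℝ] V →L[ℝ] ℝ) {u v u' v' : ℝ → V}
    (hu : ∀ t, HasDerivAt u (u' t) t) (hv : ∀ t, HasDerivAt v (v' t) t)
    (hc : Continuous fun t => B (u' t) (v t) + B (u t) (v' t)) :
    (∫ t in (0:ℝ)..T, (B (u' t) (v t) + B (u t) (v' t)))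
      = B (u T) (v T) - B (u 0) (v 0) :=
  intervalIntegral.integral_eq_sub_of_hasDerivAt
    (fun t _ => hasDerivAt_bilin B (hu t) (hv t)) (hc.intervalIntegrable 0 T)

lemma rev_integral {E : Type*} [NormedAddCommGroup E] [NormedSpace ℝ E]
    (T : ℝ) (f : ℝ → E) :
    (∫ t in (0:ℝ)..T, f (T - t)) = ∫ t in (0:ℝ)..T, f t := by
  simp [intervalIntegral.integral_comp_sub_left f T]

lemma ftc_cont [CompleteSpace V] {f : ℝ → V} (hf : Continuous f) (t : ℝ) :
    HasDerivAt (fun u => ∫ s in (0:ℝ)..u, f s) (f t) t :=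
  intervalIntegral.integral_hasDerivAt_right (hf.intervalIntegrable _ _)
    (hf.stronglyMeasurable.stronglyMeasurableAtFilter) hf.continuousAt

lemma cont_bilin (B : V →L[ℝ] V →L[ℝ] ℝ) {u v : ℝ → V}
    (hu : Continuous u) (hv : Continuous v) :
    Continuous fun t => B (u t) (v t) :=
  B.continuous₂.comp (hu.prodMk hv)
end Aux

/-- The adjoint of the abstract linear FSI operator has the same structure as the forward
operator, but with the temporal flow of information reversed:
`⟨A(η,p),(ψ,q)⟩ = ⟨A(ψ̄,q̄),(η̄,p̄)⟩` where `f̄(t) = f(T - t)`. -/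
theorem fsi_adjoint_time_reversal
    {V P : Type*} [NormedAddCommGroup V] [InnerProductSpace ℝ V] [CompleteSpace V]
    [NormedAddCommGroup P] [InnerProductSpace ℝ P] [CompleteSpace P]
    (T : ℝ) (hT : 0 < T) (ρf ρs : ℝ)
    (af as mf ms : V →L[ℝ] V →L[ℝ] ℝ)
    (haf : ∀ u v : V, af u v = af v u) (has : ∀ u v : V, as u v = as v u)
    (hmf : ∀ u v : V, mf u v = mf v u) (hms : ∀ u v : V, ms u v = ms v u)
    (D : V →L[ℝ] P)
    (η ψ : ℝ → V) (hη : ContDiff ℝ 1 η) (hψ : ContDiff ℝ 1 ψ)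
    (p q : ℝ → P) (hp : Continuous p) (hq : Continuous q) :
    fsiForm T ρf ρs af as mf ms D η p ψ q
      = fsiForm T ρf ρs af as mf ms D
          (fun t => ψ (T - t)) (fun t => q (T - t))
          (fun t => η (T - t)) (fun t => p (T - t)) := by
  have hηc : Continuous η := hη.continuous
  have hψc : Continuous ψ := hψ.continuous
  have hη'c : Continuous (deriv η) := hη.continuous_deriv le_rfl
  have hψ'c : Continuous (deriv ψ) := hψ.continuous_deriv le_rfl
  have hηd : ∀ t, HasDerivAt η (deriv η t) t :=
    fun t => (hη.differentiable one_ne_zero t).hasDerivAt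
  have hψd : ∀ t, HasDerivAt ψ (deriv ψ t) t :=
    fun t => (hψ.differentiable one_ne_zero t).hasDerivAt
  -- derivative of the reversed ψ
  have hrev : ∀ t : ℝ, HasDerivAt (fun t => ψ (T - t)) (-(deriv ψ (T - t))) t := by
    intro t
    have h1 : HasDerivAt (fun t : ℝ => T - t) (-1) t := (hasDerivAt_id t).const_sub T
    have := (hψd (T - t)).scomp t h1
    simpa [Function.comp_def] using this
  have hrevderiv : ∀ t : ℝ, deriv (fun t => ψ (T - t)) t = -(deriv ψ (T - t)) :=
    fun t => (hrev t).deriv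
  -- the mf/ms time-reversal integral identities
  have hrevB : ∀ B : V →L[ℝ] V →L[ℝ] ℝ,
      (∫ t in (0:ℝ)..T, B (deriv (fun t => ψ (T - t)) t) (η (T - t)))
        = -∫ t in (0:ℝ)..T, B (deriv ψ t) (η t) := by
    intro B
    have : (fun t => B (deriv (fun t => ψ (T - t)) t) (η (T - t)))
        = fun t => (fun s => -(B (deriv ψ s) (η s))) (T - t) := by
      funext t; simp [hrevderiv t]
    rw [this, rev_integral T (fun s => -(B (deriv ψ s) (η s))), intervalIntegral.integral_neg]
  -- integration by parts for mf/ms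
  have hibp : ∀ B : V →L[ℝ] V →L[ℝ] ℝ, (∀ u v : V, B u v = B v u) →
      (∫ t in (0:ℝ)..T, B (deriv η t) (ψ t)) + (∫ t in (0:ℝ)..T, B (deriv ψ t) (η t))
        = B (η T) (ψ T) - B (η 0) (ψ 0) := by
    intro B hB
    have h1 := ibp_bilin T B hηd hψd
      ((cont_bilin B hη'c hψc).add (cont_bilin B hηc hψ'c))
    rw [intervalIntegral.integral_add
        ((cont_bilin B hη'c hψc).intervalIntegrable 0 T)
        ((cont_bilin B hηc hψ'c).intervalIntegrable 0 T)] at h1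
    have h2 : (∫ t in (0:ℝ)..T, B (η t) (deriv ψ t))
        = ∫ t in (0:ℝ)..T, B (deriv ψ t) (η t) := by
      simp_rw [fun t => hB (η t) (deriv ψ t)]
    linarith [h1, h2.symm ▸ h1]
  -- af term
  have haf' : (∫ t in (0:ℝ)..T, af (ψ (T - t)) (η (T - t)))
      = ∫ t in (0:ℝ)..T, af (η t) (ψ t) := by
    have : (fun t => af (ψ (T - t)) (η (T - t)))
        = fun t => (fun s => af (η s) (ψ s)) (T - t) := by
      funext t; exact haf _ _
    rw [this, rev_integral T (fun s => af (η s) (ψ s))]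
  -- inner product terms
  have hq' : (∫ t in (0:ℝ)..T, ⟪q (T - t), D (η (T - t))⟫_ℝ)
      = ∫ t in (0:ℝ)..T, ⟪D (η t), q t⟫_ℝ := by
    have : (fun t => ⟪q (T - t), D (η (T - t))⟫_ℝ)
        = fun t => (fun s => ⟪D (η s), q s⟫_ℝ) (T - t) := by
      funext t; exact real_inner_comm _ _
    rw [this, rev_integral T (fun s => ⟪D (η s), q s⟫_ℝ)]
  have hp' : (∫ t in (0:ℝ)..T, ⟪D (ψ (T - t)), p (T - t)⟫_ℝ)
      = ∫ t in (0:ℝ)..T, ⟪p t, D (ψ t)⟫_ℝ := by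
    have : (fun t => ⟪D (ψ (T - t)), p (T - t)⟫_ℝ)
        = fun t => (fun s => ⟪p s, D (ψ s)⟫_ℝ) (T - t) := by
      funext t; exact real_inner_comm _ _
    rw [this, rev_integral T (fun s => ⟪p s, D (ψ s)⟫_ℝ)]
  -- the as term
  have has' : (∫ t in (0:ℝ)..T, as (∫ s in (0:ℝ)..t, ψ (T - s)) (η (T - t)))
      = ∫ t in (0:ℝ)..T, as (∫ s in (0:ℝ)..t, η s) (ψ t) := by
    set E : ℝ → V := fun t => ∫ s in (0:ℝ)..t, η s with hE
    set W : ℝ → V := fun t => ∫ s in (0:ℝ)..(T - t), ψ (T - s) with hW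
    have hEd : ∀ t, HasDerivAt E (η t) t := ftc_cont hηc
    have hψrevc : Continuous fun s => ψ (T - s) := hψc.comp (continuous_const.sub continuous_id)
    have hWd : ∀ t, HasDerivAt W (-(ψ t)) t := by
      intro t
      have h1 : HasDerivAt (fun t : ℝ => T - t) (-1) t := (hasDerivAt_id t).const_sub T
      have h2 : HasDerivAt W ((-1 : ℝ) • ψ (T - (T - t))) t :=
        HasDerivAt.scomp t (ftc_cont hψrevc (T - t)) h1
      have h3 : (-1 : ℝ) • ψ (T - (T - t)) = -(ψ t) := by simp
      rwa [h3] at h2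
    have hEc : Continuous E := by
      rw [continuous_iff_continuousAt]; exact fun t => (hEd t).continuousAt
    have hWc : Continuous W := by
      rw [continuous_iff_continuousAt]; exact fun t => (hWd t).continuousAt
    -- step 1: reverse the integral
    have step1 : (∫ t in (0:ℝ)..T, as (∫ s in (0:ℝ)..t, ψ (T - s)) (η (T - t)))
        = ∫ t in (0:ℝ)..T, as (W t) (η t) := by
      have : (fun t => as (∫ s in (0:ℝ)..t, ψ (T - s)) (η (T - t)))
          = fun t => (fun r => as (W r) (η r)) (T - t) := by
        funext t; simp [hW]
      rw [this, rev_integral T (fun r => as (W r) (η r))]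
    -- step 2: integration by parts
    have step2 := ibp_bilin T as (u := W) (v := E) hWd hEd
      ((cont_bilin as (hψc.neg) hEc).add (cont_bilin as hWc hηc))
    have hWT : W T = 0 := by simp [hW]
    have hE0 : E 0 = 0 := by simp [hE]
    rw [hWT, hE0] at step2
    simp only [map_zero, ContinuousLinearMap.zero_apply, sub_zero, zero_sub] at step2
    rw [intervalIntegral.integral_add
        ((cont_bilin as (u := fun t => -(ψ t)) (hψc.neg) hEc).intervalIntegrable 0 T)
        ((cont_bilin as hWc hηc).intervalIntegrable 0 T)] at step2
    have h3 : (∫ t in (0:ℝ)..T, as (-(ψ t)) (E t))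
        = -∫ t in (0:ℝ)..T, as (ψ t) (E t) := by
      rw [← intervalIntegral.integral_neg]
      congr 1; funext t; simp
    have h4 : (∫ t in (0:ℝ)..T, as (ψ t) (E t))
        = ∫ t in (0:ℝ)..T, as (E t) (ψ t) := by
      simp_rw [fun t => has (ψ t) (E t)]
    rw [step1]
    have : (∫ t in (0:ℝ)..T, as (W t) (η t)) = ∫ t in (0:ℝ)..T, as (ψ t) (E t) := by
      rw [h3] at step2; linarith
    rw [this, h4]
  -- assemble
  have hmf' := hibp mf hmf
  have hms' := hibp ms hms
  have hRmf := hrevB mf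
  have hRms := hrevB ms
  simp only [fsiForm, sub_zero] at *
  rw [haf', hq', hp', has', hRmf, hRms, hmf (ψ T) (η T), hms (ψ T) (η T)]
  linear_combination ρf * hmf' + ρs * hms'
end

section
/- Let V be a real Banach space, T > 0, a : V × V → ℝ a continuous symmetric bilinear form, and η, ψ : ℝ → V continuous functions. Then ∫₀ᵀ a(∫₀ᵗ η(s) ds, ψ(t)) dt = ∫₀ᵀ a(∫₀ᵗ ψ̄(s) ds, η̄(t)) dt, where f̄(t) := f(T − t) denotes time reversal. -/
open MeasureTheory

private theorem fsi_key
    {V : Type*} [NormedAddCommGroup V] [NormedSpace ℝ V] [CompleteSpace V]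
    (T : ℝ) (a : V →L[ℝ] V →L[ℝ] ℝ)
    (η ψ : ℝ → V) (hη : Continuous η) (hψ : Continuous ψ) :
    (∫ t in (0:ℝ)..T, a (∫ s in (0:ℝ)..t, η s) (ψ t))
      = ∫ t in (0:ℝ)..T, a (η t) (∫ s in t..T, ψ s) := by
  set F : ℝ → V := fun t => ∫ s in (0:ℝ)..t, η s with hF_def
  set G : ℝ → V := fun t => ∫ s in t..T, ψ s with hG_def
  have hF : ∀ t : ℝ, HasDerivAt F (η t) t := by
    intro t
    exact intervalIntegral.integral_hasDerivAt_right (hη.intervalIntegrable _ _)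
      (hη.stronglyMeasurableAtFilter _ _) hη.continuousAt
  have hG : ∀ t : ℝ, HasDerivAt G (-ψ t) t := by
    intro t
    have h1 : HasDerivAt (fun u => ∫ s in T..u, ψ s) (ψ t) t :=
      intervalIntegral.integral_hasDerivAt_right (hψ.intervalIntegrable _ _)
        (hψ.stronglyMeasurableAtFilter _ _) hψ.continuousAt
    have h2 := h1.neg
    convert h2 using 1
    funext u
    exact intervalIntegral.integral_symm _ _
  have hFc : Continuous F := by
    rw [continuous_iff_continuousAt]; exact fun t => (hF t).continuousAt
  have hGc : Continuous G := by
    rw [continuous_iff_continuousAt]; exact fun t => (hG t).continuousAt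
  have hΦ : ∀ t : ℝ, HasDerivAt (fun t => a (F t) (G t))
      (a (η t) (G t) - a (F t) (ψ t)) t := by
    intro t
    have hc : HasDerivAt (fun t => a (F t)) (a (η t)) t :=
      a.hasFDerivAt.comp_hasDerivAt t (hF t)
    have := hc.clm_apply (hG t)
    rw [show a (η t) (G t) - a (F t) (ψ t) = a (η t) (G t) + a (F t) (-ψ t) by
      simp [sub_eq_add_neg]]
    exact this
  have hcont : Continuous fun t => a (η t) (G t) - a (F t) (ψ t) := by
    have h1 : Continuous fun t => a (η t) (G t) :=
      (a.continuous₂.comp (hη.prodMk hGc) : _)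
    have h2 : Continuous fun t => a (F t) (ψ t) :=
      (a.continuous₂.comp (hFc.prodMk hψ) : _)
    exact h1.sub h2
  have hFTC := intervalIntegral.integral_eq_sub_of_hasDerivAt
    (fun t _ => hΦ t) (hcont.intervalIntegrable 0 T)
  have hF0 : F 0 = 0 := by simp [hF_def]
  have hGT : G T = 0 := by simp [hG_def]
  have hzero : (∫ t in (0:ℝ)..T, (a (η t) (G t) - a (F t) (ψ t))) = 0 := by
    rw [hFTC, hF0, hGT]; simp
  have hsplit : (∫ t in (0:ℝ)..T, (a (η t) (G t) - a (F t) (ψ t)))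
      = (∫ t in (0:ℝ)..T, a (η t) (G t)) - ∫ t in (0:ℝ)..T, a (F t) (ψ t) := by
    apply intervalIntegral.integral_sub
    · exact ((a.continuous₂.comp (hη.prodMk hGc)) : Continuous _).intervalIntegrable 0 T
    · exact ((a.continuous₂.comp (hFc.prodMk hψ)) : Continuous _).intervalIntegrable 0 T
  rw [hsplit] at hzero
  linarith [hzero]

/-- Symmetry of the solid memory term under time reversal: for a continuous symmetric
bilinear form `a`,
`∫₀ᵀ a(∫₀ᵗ η(s) ds, ψ(t)) dt = ∫₀ᵀ a(∫₀ᵗ ψ̄(s) ds, η̄(t)) dt`, where `f̄(t) = f(T − t)`. -/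
theorem fsi_memory_term_symmetric_time_reversal
    {V : Type*} [NormedAddCommGroup V] [NormedSpace ℝ V] [CompleteSpace V]
    (T : ℝ) (hT : 0 < T) (a : V →L[ℝ] V →L[ℝ] ℝ)
    (hsymm : ∀ u v : V, a u v = a v u)
    (η ψ : ℝ → V) (hη : Continuous η) (hψ : Continuous ψ) :
    (∫ t in (0:ℝ)..T, a (∫ s in (0:ℝ)..t, η s) (ψ t))
      = ∫ t in (0:ℝ)..T, a (∫ s in (0:ℝ)..t, ψ (T - s)) (η (T - t)) := by
  have hinner : ∀ t : ℝ, (∫ s in (0:ℝ)..t, ψ (T - s)) = ∫ s in (T - t)..T, ψ s := by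
    intro t
    have := intervalIntegral.integral_comp_sub_left (a := (0:ℝ)) (b := t) ψ T
    simpa using this
  have hRHS : (∫ t in (0:ℝ)..T, a (∫ s in (0:ℝ)..t, ψ (T - s)) (η (T - t)))
      = ∫ t in (0:ℝ)..T, a (∫ s in t..T, ψ s) (η t) := by
    have h1 : (∫ t in (0:ℝ)..T, a (∫ s in (0:ℝ)..t, ψ (T - s)) (η (T - t)))
        = ∫ t in (0:ℝ)..T, (fun u => a (∫ s in u..T, ψ s) (η u)) (T - t) := by
      apply intervalIntegral.integral_congr
      intro t _
      simp only [hinner t]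
    rw [h1]
    have := intervalIntegral.integral_comp_sub_left (a := (0:ℝ)) (b := T)
      (fun u => a (∫ s in u..T, ψ s) (η u)) T
    simpa using this
  rw [hRHS, fsi_key T a η ψ hη hψ]
  apply intervalIntegral.integral_congr
  intro t _
  exact (hsymm _ _).symm
end
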